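/- Let p be a prime and R a commutative ring in which p·1 = 0. Let u ∈ R[Y] be a polynomial of degree < p. Then the following are equivalent: (i) u(0) = 1 and u(Y + Y') ≡ u(Y)·u(Y') modulo the ideal (Y^p, Y'^p) in the polynomial ring R[Y, Y']; (ii) there exists x ∈ R with x^p = 0 such that u = ∑_{i=0}^{p-1} (i!)^{-1} x^i Y^i. Moreover, in case (ii) the element x is uniquely determined by u: it is the coefficient of Y in u. (This is the ring-level content of the statement that the Cartier dual of α_p is canonically isomorphic to α_p: group-like elements of R[Y]/(Y^p) for the additive comultiplication Y ↦ Y⊗1 + 1⊗Y are exactly the truncated exponentials E(xY) with x^p = 0.) -/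

import Mathlib

open Polynomial MvPolynomial Finset

lemma cast_congr_mod {p : ℕ} {R : Type*} [CommRing R] (hchar : (p : R) = 0)
    {a b : ℕ} (h : (a : ZMod p) = (b : ZMod p)) : (a : R) = (b : R) := by
  have hmod : a % p = b % p := (ZMod.natCast_eq_natCast_iff a b p).mp h
  have ha : ∀ n : ℕ, (n : R) = ((n % p : ℕ) : R) := by
    intro n
    conv_lhs => rw [← Nat.div_add_mod n p]
    push_cast
    rw [hchar]; ring
  rw [ha a, ha b, hmod]

lemma fact_ne_zero_zmod {p : ℕ} (hp : p.Prime) {i : ℕ} (hi : i < p) :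
    ((Nat.factorial i : ZMod p)) ≠ 0 := by
  haveI : NeZero p := ⟨hp.ne_zero⟩
  rw [Ne, ZMod.natCast_eq_zero_iff]
  intro hdvd
  exact absurd ((Nat.Prime.dvd_factorial hp).mp hdvd) (by omega)

lemma val_cast_zmod {p : ℕ} (h : p ≠ 0) (a : ZMod p) : ((a.val : ℕ) : ZMod p) = a := by
  haveI : NeZero p := ⟨h⟩
  rw [ZMod.natCast_val, ZMod.cast_id]

lemma key_choose {p : ℕ} (hp : p.Prime) {R : Type*} [CommRing R] (hchar : (p : R) = 0)
    {j k : ℕ} (hjk : j + k < p) :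
    ((((Nat.factorial (j+k) : ZMod p))⁻¹.val * (j+k).choose j : ℕ) : R) =
    ((((Nat.factorial j : ZMod p))⁻¹.val * (((Nat.factorial k : ZMod p))⁻¹.val) : ℕ) : R) := by
  haveI : Fact p.Prime := ⟨hp⟩
  apply cast_congr_mod hchar
  push_cast
  rw [val_cast_zmod hp.ne_zero, val_cast_zmod hp.ne_zero, val_cast_zmod hp.ne_zero]
  have hnat : ((j+k).choose j * j.factorial * k.factorial : ℕ) = (j+k).factorial := by
    have := Nat.choose_mul_factorial_mul_factorial (Nat.le_add_right j k)
    simpa using this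
  have hz : ((j+k).choose j : ZMod p) * (j.factorial : ZMod p) * (k.factorial : ZMod p)
      = ((j+k).factorial : ZMod p) := by exact_mod_cast congrArg (Nat.cast : ℕ → ZMod p) hnat
  have h1 := fact_ne_zero_zmod hp (show j < p by omega)
  have h2 := fact_ne_zero_zmod hp (show k < p by omega)
  have h3 := fact_ne_zero_zmod hp (show j + k < p by omega)
  field_simp
  linear_combination hz

lemma key_fact_inv {p : ℕ} (hp : p.Prime) {R : Type*} [CommRing R] (hchar : (p : R) = 0)
    {i : ℕ} (hi : i < p) :
    ((((Nat.factorial i : ZMod p))⁻¹.val * Nat.factorial i : ℕ) : R) = 1 := by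
  haveI : Fact p.Prime := ⟨hp⟩
  have h : ((((Nat.factorial i : ZMod p))⁻¹.val * Nat.factorial i : ℕ) : ZMod p) = ((1:ℕ) : ZMod p) := by
    push_cast
    rw [val_cast_zmod hp.ne_zero]
    exact inv_mul_cancel₀ (fact_ne_zero_zmod hp hi)
  have := cast_congr_mod (R := R) hchar h
  simpa using this

lemma exp_add_trunc {p : ℕ} (hp : p.Prime) {S : Type*} [CommRing S] (hcharS : (p : S) = 0)
    (a b : S) (hab : ∀ j k, j < p → k < p → p ≤ j + k → a ^ j * b ^ k = 0) :
    (∑ i ∈ Finset.range p, ((((Nat.factorial i : ZMod p))⁻¹.val : ℕ) : S) * (a + b) ^ i) =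
      (∑ i ∈ Finset.range p, ((((Nat.factorial i : ZMod p))⁻¹.val : ℕ) : S) * a ^ i) *
      (∑ i ∈ Finset.range p, ((((Nat.factorial i : ZMod p))⁻¹.val : ℕ) : S) * b ^ i) := by
  rw [Finset.sum_mul_sum, ← Finset.sum_product']
  rw [← Finset.sum_filter_add_sum_filter_not (range p ×ˢ range p) (fun q => q.1 + q.2 < p)]
  have h0 : ∑ q ∈ (range p ×ˢ range p).filter (fun q => ¬ q.1 + q.2 < p),
      (((((Nat.factorial q.1 : ZMod p))⁻¹.val : ℕ) : S) * a ^ q.1) *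
      (((((Nat.factorial q.2 : ZMod p))⁻¹.val : ℕ) : S) * b ^ q.2) = 0 := by
    apply Finset.sum_eq_zero
    intro q hq
    simp only [Finset.mem_filter, Finset.mem_product, Finset.mem_range] at hq
    have := hab q.1 q.2 hq.1.1 hq.1.2 (by omega)
    calc _ = ((((Nat.factorial q.1 : ZMod p))⁻¹.val : ℕ) : S) *
        ((((Nat.factorial q.2 : ZMod p))⁻¹.val : ℕ) : S) * (a ^ q.1 * b ^ q.2) := by ring
      _ = 0 := by rw [this, mul_zero]
  rw [h0, add_zero]
  simp only [add_pow, Finset.mul_sum]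
  rw [Finset.sum_sigma' (range p) (fun i => range (i+1))]
  apply Finset.sum_nbij' (fun y => (y.2, y.1 - y.2)) (fun q => ⟨q.1 + q.2, q.1⟩)
  · intro y hy
    simp only [Finset.mem_sigma, Finset.mem_range] at hy
    simp only [Finset.mem_filter, Finset.mem_product, Finset.mem_range]
    omega
  · intro q hq
    simp only [Finset.mem_filter, Finset.mem_product, Finset.mem_range] at hq
    simp only [Finset.mem_sigma, Finset.mem_range]
    omega
  · rintro ⟨i, j⟩ hy
    simp only [Finset.mem_sigma, Finset.mem_range] at hy
    have : j + (i - j) = i := by omega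
    simp [this]
  · rintro ⟨j, k⟩ hq
    simp only [Finset.mem_filter, Finset.mem_product, Finset.mem_range] at hq
    have : j + k - j = k := by omega
    simp [this]
  · intro y hy
    simp only [Finset.mem_sigma, Finset.mem_range] at hy
    obtain ⟨hy1, hy2⟩ := hy
    set j := y.2
    set k := y.1 - y.2
    have hy1' : y.1 = j + k := by omega
    have hkey := key_choose hp hcharS (j := j) (k := k) (by omega)
    push_cast at hkey
    calc ((((Nat.factorial y.1 : ZMod p))⁻¹.val : ℕ) : S) * (a ^ y.2 * b ^ (y.1 - y.2) * ((y.1).choose y.2 : ℕ)) 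
        = (((((Nat.factorial (j+k) : ZMod p))⁻¹.val : ℕ) : S) * (((j+k).choose j : ℕ) : S)) * (a ^ j * b ^ k) := by
          rw [hy1']
          have hk : j + k - y.snd = k := by omega
          rw [hk]; ring
      _ = (((((Nat.factorial j : ZMod p))⁻¹.val : ℕ) : S) * ((((Nat.factorial k : ZMod p))⁻¹.val : ℕ) : S)) * (a ^ j * b ^ k) := by
          rw [hkey]
      _ = _ := by ring

/-- Group-like elements of `R[Y]/(Y^p)` for the additive comultiplication are exactly the
truncated exponentials `E(xY)` with `x^p = 0`, and `x` is determined as the coefficient of `Y`.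
(Ring-level content of the canonical self-Cartier-duality of `α_p`.) -/
theorem alpha_p_cartier_dual (p : ℕ) (hp : p.Prime) (R : Type*) [CommRing R]
    (hchar : (p : R) = 0) (u : Polynomial R) (hdeg : u.degree < p) :
    ((u.eval 0 = 1 ∧
        Polynomial.aeval (MvPolynomial.X 0 + MvPolynomial.X 1 : MvPolynomial (Fin 2) R) u -
            Polynomial.aeval (MvPolynomial.X 0 : MvPolynomial (Fin 2) R) u *
              Polynomial.aeval (MvPolynomial.X 1 : MvPolynomial (Fin 2) R) u ∈
          Ideal.span {(MvPolynomial.X 0 : MvPolynomial (Fin 2) R) ^ p,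
            (MvPolynomial.X 1 : MvPolynomial (Fin 2) R) ^ p}) ↔
      ∃ x : R, x ^ p = 0 ∧
        u = ∑ i ∈ Finset.range p,
          Polynomial.C (((((Nat.factorial i : ZMod p))⁻¹).val : R) * x ^ i) * Polynomial.X ^ i) ∧
    ∀ x : R, x ^ p = 0 →
      u = (∑ i ∈ Finset.range p,
          Polynomial.C (((((Nat.factorial i : ZMod p))⁻¹).val : R) * x ^ i) * Polynomial.X ^ i) →
      x = u.coeff 1 := by
  haveI : Fact p.Prime := ⟨hp⟩
  haveI : Fact (1 < p) := ⟨hp.one_lt⟩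
  have hp2 : 2 ≤ p := hp.two_le
  have hc0 : ((Nat.factorial 0 : ZMod p))⁻¹.val = 1 := by
    simp [Nat.factorial_zero, ZMod.val_one]
  have hc1 : ((Nat.factorial 1 : ZMod p))⁻¹.val = 1 := by
    simp [Nat.factorial_one, ZMod.val_one]
  constructor
  · constructor
    · -- forward direction
      rintro ⟨h1, h2⟩
      rw [Ideal.mem_span_pair] at h2
      obtain ⟨f, g, hfg⟩ := h2
      set x := u.coeff 1 with hxdef
      -- transfer via φ to R[Y][Z]
      set φ : MvPolynomial (Fin 2) R →ₐ[R] Polynomial (Polynomial R) :=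
        MvPolynomial.aeval ![Polynomial.C Polynomial.X, Polynomial.X] with hφdef
      have hφ0 : φ (MvPolynomial.X 0) = Polynomial.C Polynomial.X := by simp [hφdef]
      have hφ1 : φ (MvPolynomial.X 1) = Polynomial.X := by simp [hφdef]
      have halg : (algebraMap R (Polynomial (Polynomial R))) =
          (Polynomial.C : Polynomial R →+* Polynomial (Polynomial R)).comp
            (Polynomial.C : R →+* Polynomial R) := by
        ext r
        simp [Polynomial.algebraMap_apply]
      have hkey : ∀ t : Polynomial (Polynomial R),
          Polynomial.aeval t u = Polynomial.eval₂ Polynomial.C t (u.map Polynomial.C) := by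
        intro t
        rw [Polynomial.aeval_def, Polynomial.eval₂_map, halg]
      have happ := congrArg φ hfg
      simp only [map_add, map_mul, map_pow, hφ0, hφ1, map_sub] at happ
      rw [← Polynomial.aeval_algHom_apply, ← Polynomial.aeval_algHom_apply,
        ← Polynomial.aeval_algHom_apply, map_add, hφ0, hφ1] at happ
      have hcoeff1 := congrArg (fun q => Polynomial.coeff q 1) happ
      -- compute the three aeval's
      have hA : (Polynomial.aeval (Polynomial.C Polynomial.X + Polynomial.X :
          Polynomial (Polynomial R)) u).coeff 1 = Polynomial.derivative u := by
        rw [hkey, show Polynomial.eval₂ Polynomial.C (Polynomial.C Polynomial.X + Polynomial.X)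
            (u.map Polynomial.C) = (u.map Polynomial.C).comp
            (Polynomial.X + Polynomial.C Polynomial.X) from by rw [add_comm]; rfl,
          ← Polynomial.taylor_apply, Polynomial.taylor_coeff_one, Polynomial.derivative_map,
          Polynomial.eval_map, Polynomial.eval₂_C_X]
      have hB : (Polynomial.aeval (Polynomial.C Polynomial.X : Polynomial (Polynomial R)) u) =
          Polynomial.C u := by
        rw [Polynomial.aeval_def, halg, ← Polynomial.hom_eval₂, Polynomial.eval₂_C_X]
      have hC : (Polynomial.aeval (Polynomial.X : Polynomial (Polynomial R)) u) =
          u.map Polynomial.C := by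
        rw [hkey, Polynomial.eval₂_C_X]
      rw [hB, hC, Polynomial.coeff_sub, hA, Polynomial.coeff_add,
        show (Polynomial.C (Polynomial.X : Polynomial R)) ^ p = Polynomial.C (Polynomial.X ^ p)
          from (map_pow _ _ _).symm,
        Polynomial.coeff_mul_C, Polynomial.coeff_mul_X_pow',
        if_neg (by have := hp.one_lt; omega : ¬ p ≤ 1),
        Polynomial.coeff_C_mul, Polynomial.coeff_map] at hcoeff1
      rw [← hxdef] at hcoeff1
      rw [add_zero] at hcoeff1
      -- hcoeff1 : (φ f).coeff 1 * X^p = derivative u - u * C x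
      set h := (φ f).coeff 1 with hhdef
      have hlt : (Polynomial.derivative u - u * Polynomial.C x).degree < p := by
        apply lt_of_le_of_lt (Polynomial.degree_sub_le _ _)
        rw [sup_lt_iff]
        constructor
        · exact lt_of_le_of_lt Polynomial.degree_derivative_le hdeg
        · calc (u * Polynomial.C x).degree ≤ u.degree + (Polynomial.C x).degree :=
              Polynomial.degree_mul_le _ _
            _ ≤ u.degree + 0 := add_le_add (le_refl _) Polynomial.degree_C_le
            _ = u.degree := add_zero _
            _ < p := hdeg
      have hh0 : h = 0 := by
        ext n
        have hc := congrArg (fun q => Polynomial.coeff q (p+n)) hcoeff1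
        rw [Polynomial.coeff_mul_X_pow', if_pos (Nat.le_add_right p n),
          Nat.add_sub_cancel_left,
          Polynomial.coeff_eq_zero_of_degree_lt
            (lt_of_lt_of_le hlt (by exact_mod_cast Nat.cast_le.mpr (Nat.le_add_right p n)))] at hc
        simpa using hc
      have hder : Polynomial.derivative u = u * Polynomial.C x := by
        rw [hh0, zero_mul] at hcoeff1
        exact (sub_eq_zero.mp hcoeff1.symm)
      have hrec : ∀ n : ℕ, u.coeff (n+1) * ((n : R)+1) = u.coeff n * x := by
        intro n
        have := congrArg (fun q => Polynomial.coeff q n) hder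
        simpa [Polynomial.coeff_derivative, Polynomial.coeff_mul_C] using this
      have hinv : ∀ m : ℕ, 0 < m → m < p → ((((m : ZMod p))⁻¹.val * m : ℕ) : R) = 1 := by
        intro m h0 hm
        have hne : ((m:ℕ) : ZMod p) ≠ 0 := by
          rw [Ne, ZMod.natCast_eq_zero_iff]
          intro hd
          exact absurd (Nat.le_of_dvd h0 hd) (by omega)
        have hz : ((((m : ZMod p))⁻¹.val * m : ℕ) : ZMod p) = ((1:ℕ) : ZMod p) := by
          push_cast
          rw [val_cast_zmod hp.ne_zero]
          exact inv_mul_cancel₀ hne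
        simpa using cast_congr_mod hchar hz
      have hcoeffs : ∀ i, i < p →
          u.coeff i = ((((Nat.factorial i : ZMod p))⁻¹.val : ℕ) : R) * x ^ i := by
        intro i
        induction i with
        | zero =>
          intro _
          rw [Polynomial.coeff_zero_eq_eval_zero, h1]
          simp [ZMod.val_one]
        | succ n ih =>
          intro hn
          have hr := hrec n
          rw [ih (by omega)] at hr
          have hd1 : (((((n+1 : ℕ) : ZMod p))⁻¹.val : ℕ) : R) * ((n : R)+1) = 1 := by
            have := hinv (n+1) (by omega) hn
            push_cast at this ⊢
            linear_combination this
          have hd2 : (((((n+1 : ℕ) : ZMod p))⁻¹.val : ℕ) : R) *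
              ((((Nat.factorial n : ZMod p))⁻¹.val : ℕ) : R)
              = ((((Nat.factorial (n+1) : ZMod p))⁻¹.val : ℕ) : R) := by
            have : (((((n+1 : ℕ) : ZMod p))⁻¹.val * (((Nat.factorial n : ZMod p))⁻¹.val) : ℕ) : R)
                = ((((Nat.factorial (n+1) : ZMod p))⁻¹.val : ℕ) : R) := by
              apply cast_congr_mod hchar
              push_cast
              rw [val_cast_zmod hp.ne_zero, val_cast_zmod hp.ne_zero, val_cast_zmod hp.ne_zero]
              rw [Nat.factorial_succ]
              push_cast
              rw [mul_inv]
            exact_mod_cast this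
          have hgoal : u.coeff (n+1) = ((((Nat.factorial (n+1) : ZMod p))⁻¹.val : ℕ) : R) * x ^ (n+1) := by
            linear_combination ((((((n+1 : ℕ) : ZMod p))⁻¹.val : ℕ) : R)) * hr
              - u.coeff (n+1) * hd1 + x^(n+1) * hd2
          exact hgoal
      have hxp : x ^ p = 0 := by
        have hr := hrec (p-1)
        rw [show p - 1 + 1 = p by omega] at hr
        rw [Polynomial.coeff_eq_zero_of_degree_lt hdeg, zero_mul] at hr
        rw [hcoeffs (p-1) (by omega)] at hr
        -- hr : 0 = c_{p-1} * x^{p-1} * x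
        have hk := key_fact_inv hp hchar (show p - 1 < p by omega)
        push_cast at hk
        have hp1 : x ^ p = x ^ (p-1) * x := by
          conv_lhs => rw [show p = p - 1 + 1 by omega]
          rw [pow_succ]
        rw [hp1]
        calc x^(p-1) * x
            = (((((Nat.factorial (p-1) : ZMod p))⁻¹.val : ℕ) : R) * ((Nat.factorial (p-1) : ℕ) : R))
              * (x^(p-1) * x) := by rw [hk, one_mul]
          _ = ((Nat.factorial (p-1) : ℕ) : R) *
              (((((Nat.factorial (p-1) : ZMod p))⁻¹.val : ℕ) : R) * x^(p-1) * x) := by ring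
          _ = ((Nat.factorial (p-1) : ℕ) : R) * 0 := by rw [← hr]
          _ = 0 := mul_zero _
      have hnd : u.natDegree < p := by
        rcases eq_or_ne u 0 with h0 | h0
        · simp [h0, hp.pos]
        · exact (Polynomial.natDegree_lt_iff_degree_lt h0).mpr hdeg
      refine ⟨x, hxp, ?_⟩
      conv_lhs => rw [Polynomial.as_sum_range' u p hnd]
      refine Finset.sum_congr rfl fun i hi => ?_
      rw [hcoeffs i (Finset.mem_range.mp hi), Polynomial.C_mul_X_pow_eq_monomial]
    · -- reverse direction
      rintro ⟨x, hx, hu⟩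
      have hS : ((p : ℕ) : MvPolynomial (Fin 2) R) = 0 := by
        rw [← map_natCast (MvPolynomial.C : R →+* MvPolynomial (Fin 2) R) p, hchar, map_zero]
      have haeval : ∀ t : MvPolynomial (Fin 2) R, Polynomial.aeval t u =
          ∑ i ∈ Finset.range p, ((((Nat.factorial i : ZMod p))⁻¹.val : ℕ) :
            MvPolynomial (Fin 2) R) * (MvPolynomial.C x * t) ^ i := by
        intro t
        rw [hu, map_sum]
        refine Finset.sum_congr rfl fun i _ => ?_
        rw [map_mul, map_pow, Polynomial.aeval_X, Polynomial.aeval_C]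
        rw [show (algebraMap R (MvPolynomial (Fin 2) R)) ((((Nat.factorial i : ZMod p))⁻¹.val : R) * x ^ i)
          = MvPolynomial.C (((Nat.factorial i : ZMod p))⁻¹.val : R) * MvPolynomial.C (x ^ i) from by
            rw [← map_mul]; rfl]
        rw [mul_pow, ← map_pow, ← map_natCast (MvPolynomial.C : R →+* MvPolynomial (Fin 2) R)]
        ring
      constructor
      · rw [hu, Polynomial.eval_finset_sum]
        rw [Finset.sum_eq_single 0]
        · simp [ZMod.val_one]
        · intro i _ hne
          simp [zero_pow hne]
        · intro h; exact absurd (Finset.mem_range.mpr hp.pos) h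
      · have heq : Polynomial.aeval (MvPolynomial.X 0 + MvPolynomial.X 1 : MvPolynomial (Fin 2) R) u =
            Polynomial.aeval (MvPolynomial.X 0 : MvPolynomial (Fin 2) R) u *
            Polynomial.aeval (MvPolynomial.X 1 : MvPolynomial (Fin 2) R) u := by
          rw [haeval, haeval, haeval, mul_add]
          exact exp_add_trunc hp hS (MvPolynomial.C x * MvPolynomial.X 0)
            (MvPolynomial.C x * MvPolynomial.X 1) (by
              intro j k hj hk hjk
              have hx' : x ^ (j + k) = 0 := by
                rw [show j + k = p + (j + k - p) by omega, pow_add, hx, zero_mul]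
              calc ((MvPolynomial.C x : MvPolynomial (Fin 2) R) * MvPolynomial.X 0) ^ j *
                    (MvPolynomial.C x * MvPolynomial.X 1) ^ k
                  = (MvPolynomial.C x) ^ (j+k) *
                    (MvPolynomial.X 0 ^ j * MvPolynomial.X 1 ^ k) := by ring
                _ = MvPolynomial.C (x ^ (j+k)) *
                    (MvPolynomial.X 0 ^ j * MvPolynomial.X 1 ^ k) := by rw [map_pow]
                _ = 0 := by rw [hx', map_zero, zero_mul])
        rw [heq, sub_self]
        exact Ideal.zero_mem _
  · -- uniqueness
    intro x hx hu
    rw [hu, Polynomial.finset_sum_coeff]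
    simp only [Polynomial.coeff_C_mul, Polynomial.coeff_X_pow]
    rw [Finset.sum_eq_single 1]
    · simp [ZMod.val_one]
    · intro i _ hne
      simp [Ne.symm hne]
    · intro h; exact absurd (Finset.mem_range.mpr hp.one_lt) h
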